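/- For the Spin 3-form H_a{}^b := (1/2) ε_{ab'cd} h^{bb'} e^d ∧ T^c, where T^c = (1/2) T^c{}_{a'c'} e^{a'}∧e^{c'} with T^c{}_{a'c'} = −T^c{}_{c'a'}, one has H_a{}^b = (1/2) h^{bb'} ( T^c{}_{b'c} e^{(3)}_a + T^c{}_{ca} e^{(3)}_{b'} + T^c{}_{ab'} e^{(3)}_c ). -/

import Mathlib

set_option maxHeartbeats 4000000


open scoped BigOperators

/-- The Minkowski metric diag(-1,1,1,1). -/
noncomputable def hM : Matrix (Fin 4) (Fin 4) ℝ := Matrix.diagonal ![-1, 1, 1, 1]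

/-- The Levi-Civita symbol `ε_{abcd}` with `ε_{0123} = 1`. -/
noncomputable def eps (a b c d : Fin 4) : ℝ :=
  Matrix.det (Matrix.of fun i j => if ![a, b, c, d] i = j then (1 : ℝ) else 0)

/-- The coframe 1-forms `e^a` as generators of the exterior algebra of `ℝ⁴`. -/
noncomputable def ef (a : Fin 4) : ExteriorAlgebra ℝ (Fin 4 → ℝ) :=
  ExteriorAlgebra.ι ℝ (Pi.single a (1 : ℝ))

/-- Interior product with the frame vector dual to `e^a`. -/
noncomputable def contr (a : Fin 4) :
    ExteriorAlgebra ℝ (Fin 4 → ℝ) →ₗ[ℝ] ExteriorAlgebra ℝ (Fin 4 → ℝ) :=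
  CliffordAlgebra.contractLeft (LinearMap.proj a)

noncomputable def e4 : ExteriorAlgebra ℝ (Fin 4 → ℝ) := ef 0 * ef 1 * ef 2 * ef 3

noncomputable def e3 (a : Fin 4) : ExteriorAlgebra ℝ (Fin 4 → ℝ) := contr a e4

/-- The torsion 2-form `T^c := (1/2) T^c{}_{a'c'} e^{a'} ∧ e^{c'}`. -/
noncomputable def Tform (T : Fin 4 → Fin 4 → Fin 4 → ℝ) (c : Fin 4) :
    ExteriorAlgebra ℝ (Fin 4 → ℝ) :=
  (1 / 2 : ℝ) • ∑ a', ∑ c', T c a' c' • (ef a' * ef c')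

/-- The Spin 3-form `H_a{}^b := (1/2) ε_{ab'cd} h^{bb'} e^d ∧ T^c`. -/
noncomputable def Hform (T : Fin 4 → Fin 4 → Fin 4 → ℝ) (a b : Fin 4) :
    ExteriorAlgebra ℝ (Fin 4 → ℝ) :=
  (1 / 2 : ℝ) • ∑ b', ∑ c, ∑ d, (eps a b' c d * hM⁻¹ b b') • (ef d * Tform T c)

-- auxiliary
theorem det_fin_four' {R : Type*} [CommRing R] (M : Matrix (Fin 4) (Fin 4) R) :
    M.det =
      M 0 0 * (M 1 1 * (M 2 2 * M 3 3 - M 2 3 * M 3 2) - M 1 2 * (M 2 1 * M 3 3 - M 2 3 * M 3 1) + M 1 3 * (M 2 1 * M 3 2 - M 2 2 * M 3 1))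
    - M 0 1 * (M 1 0 * (M 2 2 * M 3 3 - M 2 3 * M 3 2) - M 1 2 * (M 2 0 * M 3 3 - M 2 3 * M 3 0) + M 1 3 * (M 2 0 * M 3 2 - M 2 2 * M 3 0))
    + M 0 2 * (M 1 0 * (M 2 1 * M 3 3 - M 2 3 * M 3 1) - M 1 1 * (M 2 0 * M 3 3 - M 2 3 * M 3 0) + M 1 3 * (M 2 0 * M 3 1 - M 2 1 * M 3 0))
    - M 0 3 * (M 1 0 * (M 2 1 * M 3 2 - M 2 2 * M 3 1) - M 1 1 * (M 2 0 * M 3 2 - M 2 2 * M 3 0) + M 1 2 * (M 2 0 * M 3 1 - M 2 1 * M 3 0)) := by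
  rw [Matrix.det_succ_row_zero]
  simp [Fin.sum_univ_succ, Matrix.det_fin_three, Matrix.submatrix, show (Fin.succAbove 1 2 : Fin 4) = 3 by rfl,
    show (Fin.succAbove 2 2 : Fin 4) = 3 by rfl, show (Fin.succAbove 3 2 : Fin 4) = 2 by rfl,
    show (Fin.succ 2 : Fin 4) = 3 by rfl, show (Fin.castSucc 2 : Fin 4) = 2 by rfl]
  ring

lemma fk0 (h : 0 < 4) : (⟨0, h⟩ : Fin 4) = 0 := rfl
lemma fk1 (h : 1 < 4) : (⟨1, h⟩ : Fin 4) = 1 := rfl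
lemma fk2 (h : 2 < 4) : (⟨2, h⟩ : Fin 4) = 2 := rfl
lemma fk3 (h : 3 < 4) : (⟨3, h⟩ : Fin 4) = 3 := rfl

lemma hL00 : hM 0 0 = -1 := by simp +decide [hM, Matrix.diagonal_apply]
lemma hL01 : hM 0 1 = 0 := by simp +decide [hM, Matrix.diagonal_apply]
lemma hL02 : hM 0 2 = 0 := by simp +decide [hM, Matrix.diagonal_apply]
lemma hL03 : hM 0 3 = 0 := by simp +decide [hM, Matrix.diagonal_apply]
lemma hL10 : hM 1 0 = 0 := by simp +decide [hM, Matrix.diagonal_apply]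
lemma hL11 : hM 1 1 = 1 := by simp +decide [hM, Matrix.diagonal_apply]
lemma hL12 : hM 1 2 = 0 := by simp +decide [hM, Matrix.diagonal_apply]
lemma hL13 : hM 1 3 = 0 := by simp +decide [hM, Matrix.diagonal_apply]
lemma hL20 : hM 2 0 = 0 := by simp +decide [hM, Matrix.diagonal_apply]
lemma hL21 : hM 2 1 = 0 := by simp +decide [hM, Matrix.diagonal_apply]
lemma hL22 : hM 2 2 = 1 := by simp +decide [hM, Matrix.diagonal_apply]
lemma hL23 : hM 2 3 = 0 := by simp +decide [hM, Matrix.diagonal_apply]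
lemma hL30 : hM 3 0 = 0 := by simp +decide [hM, Matrix.diagonal_apply]
lemma hL31 : hM 3 1 = 0 := by simp +decide [hM, Matrix.diagonal_apply]
lemma hL32 : hM 3 2 = 0 := by simp +decide [hM, Matrix.diagonal_apply]
lemma hL33 : hM 3 3 = 1 := by simp +decide [hM, Matrix.diagonal_apply]

lemma epsL0000 : eps 0 0 0 0 = 0 := by simp +decide [eps, det_fin_four']
lemma epsL0001 : eps 0 0 0 1 = 0 := by simp +decide [eps, det_fin_four']
lemma epsL0002 : eps 0 0 0 2 = 0 := by simp +decide [eps, det_fin_four']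
lemma epsL0003 : eps 0 0 0 3 = 0 := by simp +decide [eps, det_fin_four']
lemma epsL0010 : eps 0 0 1 0 = 0 := by simp +decide [eps, det_fin_four']
lemma epsL0011 : eps 0 0 1 1 = 0 := by simp +decide [eps, det_fin_four']
lemma epsL0012 : eps 0 0 1 2 = 0 := by simp +decide [eps, det_fin_four']
lemma epsL0013 : eps 0 0 1 3 = 0 := by simp +decide [eps, det_fin_four']
lemma epsL0020 : eps 0 0 2 0 = 0 := by simp +decide [eps, det_fin_four']
lemma epsL0021 : eps 0 0 2 1 = 0 := by simp +decide [eps, det_fin_four']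
lemma epsL0022 : eps 0 0 2 2 = 0 := by simp +decide [eps, det_fin_four']
lemma epsL0023 : eps 0 0 2 3 = 0 := by simp +decide [eps, det_fin_four']
lemma epsL0030 : eps 0 0 3 0 = 0 := by simp +decide [eps, det_fin_four']
lemma epsL0031 : eps 0 0 3 1 = 0 := by simp +decide [eps, det_fin_four']
lemma epsL0032 : eps 0 0 3 2 = 0 := by simp +decide [eps, det_fin_four']
lemma epsL0033 : eps 0 0 3 3 = 0 := by simp +decide [eps, det_fin_four']
lemma epsL0100 : eps 0 1 0 0 = 0 := by simp +decide [eps, det_fin_four']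
lemma epsL0101 : eps 0 1 0 1 = 0 := by simp +decide [eps, det_fin_four']
lemma epsL0102 : eps 0 1 0 2 = 0 := by simp +decide [eps, det_fin_four']
lemma epsL0103 : eps 0 1 0 3 = 0 := by simp +decide [eps, det_fin_four']
lemma epsL0110 : eps 0 1 1 0 = 0 := by simp +decide [eps, det_fin_four']
lemma epsL0111 : eps 0 1 1 1 = 0 := by simp +decide [eps, det_fin_four']
lemma epsL0112 : eps 0 1 1 2 = 0 := by simp +decide [eps, det_fin_four']
lemma epsL0113 : eps 0 1 1 3 = 0 := by simp +decide [eps, det_fin_four']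
lemma epsL0120 : eps 0 1 2 0 = 0 := by simp +decide [eps, det_fin_four']
lemma epsL0121 : eps 0 1 2 1 = 0 := by simp +decide [eps, det_fin_four']
lemma epsL0122 : eps 0 1 2 2 = 0 := by simp +decide [eps, det_fin_four']
lemma epsL0123 : eps 0 1 2 3 = 1 := by simp +decide [eps, det_fin_four']
lemma epsL0130 : eps 0 1 3 0 = 0 := by simp +decide [eps, det_fin_four']
lemma epsL0131 : eps 0 1 3 1 = 0 := by simp +decide [eps, det_fin_four']
lemma epsL0132 : eps 0 1 3 2 = -1 := by simp +decide [eps, det_fin_four']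
lemma epsL0133 : eps 0 1 3 3 = 0 := by simp +decide [eps, det_fin_four']
lemma epsL0200 : eps 0 2 0 0 = 0 := by simp +decide [eps, det_fin_four']
lemma epsL0201 : eps 0 2 0 1 = 0 := by simp +decide [eps, det_fin_four']
lemma epsL0202 : eps 0 2 0 2 = 0 := by simp +decide [eps, det_fin_four']
lemma epsL0203 : eps 0 2 0 3 = 0 := by simp +decide [eps, det_fin_four']
lemma epsL0210 : eps 0 2 1 0 = 0 := by simp +decide [eps, det_fin_four']
lemma epsL0211 : eps 0 2 1 1 = 0 := by simp +decide [eps, det_fin_four']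
lemma epsL0212 : eps 0 2 1 2 = 0 := by simp +decide [eps, det_fin_four']
lemma epsL0213 : eps 0 2 1 3 = -1 := by simp +decide [eps, det_fin_four']
lemma epsL0220 : eps 0 2 2 0 = 0 := by simp +decide [eps, det_fin_four']
lemma epsL0221 : eps 0 2 2 1 = 0 := by simp +decide [eps, det_fin_four']
lemma epsL0222 : eps 0 2 2 2 = 0 := by simp +decide [eps, det_fin_four']
lemma epsL0223 : eps 0 2 2 3 = 0 := by simp +decide [eps, det_fin_four']
lemma epsL0230 : eps 0 2 3 0 = 0 := by simp +decide [eps, det_fin_four']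
lemma epsL0231 : eps 0 2 3 1 = 1 := by simp +decide [eps, det_fin_four']
lemma epsL0232 : eps 0 2 3 2 = 0 := by simp +decide [eps, det_fin_four']
lemma epsL0233 : eps 0 2 3 3 = 0 := by simp +decide [eps, det_fin_four']
lemma epsL0300 : eps 0 3 0 0 = 0 := by simp +decide [eps, det_fin_four']
lemma epsL0301 : eps 0 3 0 1 = 0 := by simp +decide [eps, det_fin_four']
lemma epsL0302 : eps 0 3 0 2 = 0 := by simp +decide [eps, det_fin_four']
lemma epsL0303 : eps 0 3 0 3 = 0 := by simp +decide [eps, det_fin_four']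
lemma epsL0310 : eps 0 3 1 0 = 0 := by simp +decide [eps, det_fin_four']
lemma epsL0311 : eps 0 3 1 1 = 0 := by simp +decide [eps, det_fin_four']
lemma epsL0312 : eps 0 3 1 2 = 1 := by simp +decide [eps, det_fin_four']
lemma epsL0313 : eps 0 3 1 3 = 0 := by simp +decide [eps, det_fin_four']
lemma epsL0320 : eps 0 3 2 0 = 0 := by simp +decide [eps, det_fin_four']
lemma epsL0321 : eps 0 3 2 1 = -1 := by simp +decide [eps, det_fin_four']
lemma epsL0322 : eps 0 3 2 2 = 0 := by simp +decide [eps, det_fin_four']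
lemma epsL0323 : eps 0 3 2 3 = 0 := by simp +decide [eps, det_fin_four']
lemma epsL0330 : eps 0 3 3 0 = 0 := by simp +decide [eps, det_fin_four']
lemma epsL0331 : eps 0 3 3 1 = 0 := by simp +decide [eps, det_fin_four']
lemma epsL0332 : eps 0 3 3 2 = 0 := by simp +decide [eps, det_fin_four']
lemma epsL0333 : eps 0 3 3 3 = 0 := by simp +decide [eps, det_fin_four']
lemma epsL1000 : eps 1 0 0 0 = 0 := by simp +decide [eps, det_fin_four']
lemma epsL1001 : eps 1 0 0 1 = 0 := by simp +decide [eps, det_fin_four']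
lemma epsL1002 : eps 1 0 0 2 = 0 := by simp +decide [eps, det_fin_four']
lemma epsL1003 : eps 1 0 0 3 = 0 := by simp +decide [eps, det_fin_four']
lemma epsL1010 : eps 1 0 1 0 = 0 := by simp +decide [eps, det_fin_four']
lemma epsL1011 : eps 1 0 1 1 = 0 := by simp +decide [eps, det_fin_four']
lemma epsL1012 : eps 1 0 1 2 = 0 := by simp +decide [eps, det_fin_four']
lemma epsL1013 : eps 1 0 1 3 = 0 := by simp +decide [eps, det_fin_four']
lemma epsL1020 : eps 1 0 2 0 = 0 := by simp +decide [eps, det_fin_four']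
lemma epsL1021 : eps 1 0 2 1 = 0 := by simp +decide [eps, det_fin_four']
lemma epsL1022 : eps 1 0 2 2 = 0 := by simp +decide [eps, det_fin_four']
lemma epsL1023 : eps 1 0 2 3 = -1 := by simp +decide [eps, det_fin_four']
lemma epsL1030 : eps 1 0 3 0 = 0 := by simp +decide [eps, det_fin_four']
lemma epsL1031 : eps 1 0 3 1 = 0 := by simp +decide [eps, det_fin_four']
lemma epsL1032 : eps 1 0 3 2 = 1 := by simp +decide [eps, det_fin_four']
lemma epsL1033 : eps 1 0 3 3 = 0 := by simp +decide [eps, det_fin_four']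
lemma epsL1100 : eps 1 1 0 0 = 0 := by simp +decide [eps, det_fin_four']
lemma epsL1101 : eps 1 1 0 1 = 0 := by simp +decide [eps, det_fin_four']
lemma epsL1102 : eps 1 1 0 2 = 0 := by simp +decide [eps, det_fin_four']
lemma epsL1103 : eps 1 1 0 3 = 0 := by simp +decide [eps, det_fin_four']
lemma epsL1110 : eps 1 1 1 0 = 0 := by simp +decide [eps, det_fin_four']
lemma epsL1111 : eps 1 1 1 1 = 0 := by simp +decide [eps, det_fin_four']
lemma epsL1112 : eps 1 1 1 2 = 0 := by simp +decide [eps, det_fin_four']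
lemma epsL1113 : eps 1 1 1 3 = 0 := by simp +decide [eps, det_fin_four']
lemma epsL1120 : eps 1 1 2 0 = 0 := by simp +decide [eps, det_fin_four']
lemma epsL1121 : eps 1 1 2 1 = 0 := by simp +decide [eps, det_fin_four']
lemma epsL1122 : eps 1 1 2 2 = 0 := by simp +decide [eps, det_fin_four']
lemma epsL1123 : eps 1 1 2 3 = 0 := by simp +decide [eps, det_fin_four']
lemma epsL1130 : eps 1 1 3 0 = 0 := by simp +decide [eps, det_fin_four']
lemma epsL1131 : eps 1 1 3 1 = 0 := by simp +decide [eps, det_fin_four']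
lemma epsL1132 : eps 1 1 3 2 = 0 := by simp +decide [eps, det_fin_four']
lemma epsL1133 : eps 1 1 3 3 = 0 := by simp +decide [eps, det_fin_four']
lemma epsL1200 : eps 1 2 0 0 = 0 := by simp +decide [eps, det_fin_four']
lemma epsL1201 : eps 1 2 0 1 = 0 := by simp +decide [eps, det_fin_four']
lemma epsL1202 : eps 1 2 0 2 = 0 := by simp +decide [eps, det_fin_four']
lemma epsL1203 : eps 1 2 0 3 = 1 := by simp +decide [eps, det_fin_four']
lemma epsL1210 : eps 1 2 1 0 = 0 := by simp +decide [eps, det_fin_four']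
lemma epsL1211 : eps 1 2 1 1 = 0 := by simp +decide [eps, det_fin_four']
lemma epsL1212 : eps 1 2 1 2 = 0 := by simp +decide [eps, det_fin_four']
lemma epsL1213 : eps 1 2 1 3 = 0 := by simp +decide [eps, det_fin_four']
lemma epsL1220 : eps 1 2 2 0 = 0 := by simp +decide [eps, det_fin_four']
lemma epsL1221 : eps 1 2 2 1 = 0 := by simp +decide [eps, det_fin_four']
lemma epsL1222 : eps 1 2 2 2 = 0 := by simp +decide [eps, det_fin_four']
lemma epsL1223 : eps 1 2 2 3 = 0 := by simp +decide [eps, det_fin_four']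
lemma epsL1230 : eps 1 2 3 0 = -1 := by simp +decide [eps, det_fin_four']
lemma epsL1231 : eps 1 2 3 1 = 0 := by simp +decide [eps, det_fin_four']
lemma epsL1232 : eps 1 2 3 2 = 0 := by simp +decide [eps, det_fin_four']
lemma epsL1233 : eps 1 2 3 3 = 0 := by simp +decide [eps, det_fin_four']
lemma epsL1300 : eps 1 3 0 0 = 0 := by simp +decide [eps, det_fin_four']
lemma epsL1301 : eps 1 3 0 1 = 0 := by simp +decide [eps, det_fin_four']
lemma epsL1302 : eps 1 3 0 2 = -1 := by simp +decide [eps, det_fin_four']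
lemma epsL1303 : eps 1 3 0 3 = 0 := by simp +decide [eps, det_fin_four']
lemma epsL1310 : eps 1 3 1 0 = 0 := by simp +decide [eps, det_fin_four']
lemma epsL1311 : eps 1 3 1 1 = 0 := by simp +decide [eps, det_fin_four']
lemma epsL1312 : eps 1 3 1 2 = 0 := by simp +decide [eps, det_fin_four']
lemma epsL1313 : eps 1 3 1 3 = 0 := by simp +decide [eps, det_fin_four']
lemma epsL1320 : eps 1 3 2 0 = 1 := by simp +decide [eps, det_fin_four']
lemma epsL1321 : eps 1 3 2 1 = 0 := by simp +decide [eps, det_fin_four']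
lemma epsL1322 : eps 1 3 2 2 = 0 := by simp +decide [eps, det_fin_four']
lemma epsL1323 : eps 1 3 2 3 = 0 := by simp +decide [eps, det_fin_four']
lemma epsL1330 : eps 1 3 3 0 = 0 := by simp +decide [eps, det_fin_four']
lemma epsL1331 : eps 1 3 3 1 = 0 := by simp +decide [eps, det_fin_four']
lemma epsL1332 : eps 1 3 3 2 = 0 := by simp +decide [eps, det_fin_four']
lemma epsL1333 : eps 1 3 3 3 = 0 := by simp +decide [eps, det_fin_four']
lemma epsL2000 : eps 2 0 0 0 = 0 := by simp +decide [eps, det_fin_four']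
lemma epsL2001 : eps 2 0 0 1 = 0 := by simp +decide [eps, det_fin_four']
lemma epsL2002 : eps 2 0 0 2 = 0 := by simp +decide [eps, det_fin_four']
lemma epsL2003 : eps 2 0 0 3 = 0 := by simp +decide [eps, det_fin_four']
lemma epsL2010 : eps 2 0 1 0 = 0 := by simp +decide [eps, det_fin_four']
lemma epsL2011 : eps 2 0 1 1 = 0 := by simp +decide [eps, det_fin_four']
lemma epsL2012 : eps 2 0 1 2 = 0 := by simp +decide [eps, det_fin_four']
lemma epsL2013 : eps 2 0 1 3 = 1 := by simp +decide [eps, det_fin_four']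
lemma epsL2020 : eps 2 0 2 0 = 0 := by simp +decide [eps, det_fin_four']
lemma epsL2021 : eps 2 0 2 1 = 0 := by simp +decide [eps, det_fin_four']
lemma epsL2022 : eps 2 0 2 2 = 0 := by simp +decide [eps, det_fin_four']
lemma epsL2023 : eps 2 0 2 3 = 0 := by simp +decide [eps, det_fin_four']
lemma epsL2030 : eps 2 0 3 0 = 0 := by simp +decide [eps, det_fin_four']
lemma epsL2031 : eps 2 0 3 1 = -1 := by simp +decide [eps, det_fin_four']
lemma epsL2032 : eps 2 0 3 2 = 0 := by simp +decide [eps, det_fin_four']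
lemma epsL2033 : eps 2 0 3 3 = 0 := by simp +decide [eps, det_fin_four']
lemma epsL2100 : eps 2 1 0 0 = 0 := by simp +decide [eps, det_fin_four']
lemma epsL2101 : eps 2 1 0 1 = 0 := by simp +decide [eps, det_fin_four']
lemma epsL2102 : eps 2 1 0 2 = 0 := by simp +decide [eps, det_fin_four']
lemma epsL2103 : eps 2 1 0 3 = -1 := by simp +decide [eps, det_fin_four']
lemma epsL2110 : eps 2 1 1 0 = 0 := by simp +decide [eps, det_fin_four']
lemma epsL2111 : eps 2 1 1 1 = 0 := by simp +decide [eps, det_fin_four']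
lemma epsL2112 : eps 2 1 1 2 = 0 := by simp +decide [eps, det_fin_four']
lemma epsL2113 : eps 2 1 1 3 = 0 := by simp +decide [eps, det_fin_four']
lemma epsL2120 : eps 2 1 2 0 = 0 := by simp +decide [eps, det_fin_four']
lemma epsL2121 : eps 2 1 2 1 = 0 := by simp +decide [eps, det_fin_four']
lemma epsL2122 : eps 2 1 2 2 = 0 := by simp +decide [eps, det_fin_four']
lemma epsL2123 : eps 2 1 2 3 = 0 := by simp +decide [eps, det_fin_four']
lemma epsL2130 : eps 2 1 3 0 = 1 := by simp +decide [eps, det_fin_four']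
lemma epsL2131 : eps 2 1 3 1 = 0 := by simp +decide [eps, det_fin_four']
lemma epsL2132 : eps 2 1 3 2 = 0 := by simp +decide [eps, det_fin_four']
lemma epsL2133 : eps 2 1 3 3 = 0 := by simp +decide [eps, det_fin_four']
lemma epsL2200 : eps 2 2 0 0 = 0 := by simp +decide [eps, det_fin_four']
lemma epsL2201 : eps 2 2 0 1 = 0 := by simp +decide [eps, det_fin_four']
lemma epsL2202 : eps 2 2 0 2 = 0 := by simp +decide [eps, det_fin_four']
lemma epsL2203 : eps 2 2 0 3 = 0 := by simp +decide [eps, det_fin_four']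
lemma epsL2210 : eps 2 2 1 0 = 0 := by simp +decide [eps, det_fin_four']
lemma epsL2211 : eps 2 2 1 1 = 0 := by simp +decide [eps, det_fin_four']
lemma epsL2212 : eps 2 2 1 2 = 0 := by simp +decide [eps, det_fin_four']
lemma epsL2213 : eps 2 2 1 3 = 0 := by simp +decide [eps, det_fin_four']
lemma epsL2220 : eps 2 2 2 0 = 0 := by simp +decide [eps, det_fin_four']
lemma epsL2221 : eps 2 2 2 1 = 0 := by simp +decide [eps, det_fin_four']
lemma epsL2222 : eps 2 2 2 2 = 0 := by simp +decide [eps, det_fin_four']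
lemma epsL2223 : eps 2 2 2 3 = 0 := by simp +decide [eps, det_fin_four']
lemma epsL2230 : eps 2 2 3 0 = 0 := by simp +decide [eps, det_fin_four']
lemma epsL2231 : eps 2 2 3 1 = 0 := by simp +decide [eps, det_fin_four']
lemma epsL2232 : eps 2 2 3 2 = 0 := by simp +decide [eps, det_fin_four']
lemma epsL2233 : eps 2 2 3 3 = 0 := by simp +decide [eps, det_fin_four']
lemma epsL2300 : eps 2 3 0 0 = 0 := by simp +decide [eps, det_fin_four']
lemma epsL2301 : eps 2 3 0 1 = 1 := by simp +decide [eps, det_fin_four']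
lemma epsL2302 : eps 2 3 0 2 = 0 := by simp +decide [eps, det_fin_four']
lemma epsL2303 : eps 2 3 0 3 = 0 := by simp +decide [eps, det_fin_four']
lemma epsL2310 : eps 2 3 1 0 = -1 := by simp +decide [eps, det_fin_four']
lemma epsL2311 : eps 2 3 1 1 = 0 := by simp +decide [eps, det_fin_four']
lemma epsL2312 : eps 2 3 1 2 = 0 := by simp +decide [eps, det_fin_four']
lemma epsL2313 : eps 2 3 1 3 = 0 := by simp +decide [eps, det_fin_four']
lemma epsL2320 : eps 2 3 2 0 = 0 := by simp +decide [eps, det_fin_four']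
lemma epsL2321 : eps 2 3 2 1 = 0 := by simp +decide [eps, det_fin_four']
lemma epsL2322 : eps 2 3 2 2 = 0 := by simp +decide [eps, det_fin_four']
lemma epsL2323 : eps 2 3 2 3 = 0 := by simp +decide [eps, det_fin_four']
lemma epsL2330 : eps 2 3 3 0 = 0 := by simp +decide [eps, det_fin_four']
lemma epsL2331 : eps 2 3 3 1 = 0 := by simp +decide [eps, det_fin_four']
lemma epsL2332 : eps 2 3 3 2 = 0 := by simp +decide [eps, det_fin_four']
lemma epsL2333 : eps 2 3 3 3 = 0 := by simp +decide [eps, det_fin_four']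
lemma epsL3000 : eps 3 0 0 0 = 0 := by simp +decide [eps, det_fin_four']
lemma epsL3001 : eps 3 0 0 1 = 0 := by simp +decide [eps, det_fin_four']
lemma epsL3002 : eps 3 0 0 2 = 0 := by simp +decide [eps, det_fin_four']
lemma epsL3003 : eps 3 0 0 3 = 0 := by simp +decide [eps, det_fin_four']
lemma epsL3010 : eps 3 0 1 0 = 0 := by simp +decide [eps, det_fin_four']
lemma epsL3011 : eps 3 0 1 1 = 0 := by simp +decide [eps, det_fin_four']
lemma epsL3012 : eps 3 0 1 2 = -1 := by simp +decide [eps, det_fin_four']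
lemma epsL3013 : eps 3 0 1 3 = 0 := by simp +decide [eps, det_fin_four']
lemma epsL3020 : eps 3 0 2 0 = 0 := by simp +decide [eps, det_fin_four']
lemma epsL3021 : eps 3 0 2 1 = 1 := by simp +decide [eps, det_fin_four']
lemma epsL3022 : eps 3 0 2 2 = 0 := by simp +decide [eps, det_fin_four']
lemma epsL3023 : eps 3 0 2 3 = 0 := by simp +decide [eps, det_fin_four']
lemma epsL3030 : eps 3 0 3 0 = 0 := by simp +decide [eps, det_fin_four']
lemma epsL3031 : eps 3 0 3 1 = 0 := by simp +decide [eps, det_fin_four']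
lemma epsL3032 : eps 3 0 3 2 = 0 := by simp +decide [eps, det_fin_four']
lemma epsL3033 : eps 3 0 3 3 = 0 := by simp +decide [eps, det_fin_four']
lemma epsL3100 : eps 3 1 0 0 = 0 := by simp +decide [eps, det_fin_four']
lemma epsL3101 : eps 3 1 0 1 = 0 := by simp +decide [eps, det_fin_four']
lemma epsL3102 : eps 3 1 0 2 = 1 := by simp +decide [eps, det_fin_four']
lemma epsL3103 : eps 3 1 0 3 = 0 := by simp +decide [eps, det_fin_four']
lemma epsL3110 : eps 3 1 1 0 = 0 := by simp +decide [eps, det_fin_four']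
lemma epsL3111 : eps 3 1 1 1 = 0 := by simp +decide [eps, det_fin_four']
lemma epsL3112 : eps 3 1 1 2 = 0 := by simp +decide [eps, det_fin_four']
lemma epsL3113 : eps 3 1 1 3 = 0 := by simp +decide [eps, det_fin_four']
lemma epsL3120 : eps 3 1 2 0 = -1 := by simp +decide [eps, det_fin_four']
lemma epsL3121 : eps 3 1 2 1 = 0 := by simp +decide [eps, det_fin_four']
lemma epsL3122 : eps 3 1 2 2 = 0 := by simp +decide [eps, det_fin_four']
lemma epsL3123 : eps 3 1 2 3 = 0 := by simp +decide [eps, det_fin_four']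
lemma epsL3130 : eps 3 1 3 0 = 0 := by simp +decide [eps, det_fin_four']
lemma epsL3131 : eps 3 1 3 1 = 0 := by simp +decide [eps, det_fin_four']
lemma epsL3132 : eps 3 1 3 2 = 0 := by simp +decide [eps, det_fin_four']
lemma epsL3133 : eps 3 1 3 3 = 0 := by simp +decide [eps, det_fin_four']
lemma epsL3200 : eps 3 2 0 0 = 0 := by simp +decide [eps, det_fin_four']
lemma epsL3201 : eps 3 2 0 1 = -1 := by simp +decide [eps, det_fin_four']
lemma epsL3202 : eps 3 2 0 2 = 0 := by simp +decide [eps, det_fin_four']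
lemma epsL3203 : eps 3 2 0 3 = 0 := by simp +decide [eps, det_fin_four']
lemma epsL3210 : eps 3 2 1 0 = 1 := by simp +decide [eps, det_fin_four']
lemma epsL3211 : eps 3 2 1 1 = 0 := by simp +decide [eps, det_fin_four']
lemma epsL3212 : eps 3 2 1 2 = 0 := by simp +decide [eps, det_fin_four']
lemma epsL3213 : eps 3 2 1 3 = 0 := by simp +decide [eps, det_fin_four']
lemma epsL3220 : eps 3 2 2 0 = 0 := by simp +decide [eps, det_fin_four']
lemma epsL3221 : eps 3 2 2 1 = 0 := by simp +decide [eps, det_fin_four']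
lemma epsL3222 : eps 3 2 2 2 = 0 := by simp +decide [eps, det_fin_four']
lemma epsL3223 : eps 3 2 2 3 = 0 := by simp +decide [eps, det_fin_four']
lemma epsL3230 : eps 3 2 3 0 = 0 := by simp +decide [eps, det_fin_four']
lemma epsL3231 : eps 3 2 3 1 = 0 := by simp +decide [eps, det_fin_four']
lemma epsL3232 : eps 3 2 3 2 = 0 := by simp +decide [eps, det_fin_four']
lemma epsL3233 : eps 3 2 3 3 = 0 := by simp +decide [eps, det_fin_four']
lemma epsL3300 : eps 3 3 0 0 = 0 := by simp +decide [eps, det_fin_four']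
lemma epsL3301 : eps 3 3 0 1 = 0 := by simp +decide [eps, det_fin_four']
lemma epsL3302 : eps 3 3 0 2 = 0 := by simp +decide [eps, det_fin_four']
lemma epsL3303 : eps 3 3 0 3 = 0 := by simp +decide [eps, det_fin_four']
lemma epsL3310 : eps 3 3 1 0 = 0 := by simp +decide [eps, det_fin_four']
lemma epsL3311 : eps 3 3 1 1 = 0 := by simp +decide [eps, det_fin_four']
lemma epsL3312 : eps 3 3 1 2 = 0 := by simp +decide [eps, det_fin_four']
lemma epsL3313 : eps 3 3 1 3 = 0 := by simp +decide [eps, det_fin_four']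
lemma epsL3320 : eps 3 3 2 0 = 0 := by simp +decide [eps, det_fin_four']
lemma epsL3321 : eps 3 3 2 1 = 0 := by simp +decide [eps, det_fin_four']
lemma epsL3322 : eps 3 3 2 2 = 0 := by simp +decide [eps, det_fin_four']
lemma epsL3323 : eps 3 3 2 3 = 0 := by simp +decide [eps, det_fin_four']
lemma epsL3330 : eps 3 3 3 0 = 0 := by simp +decide [eps, det_fin_four']
lemma epsL3331 : eps 3 3 3 1 = 0 := by simp +decide [eps, det_fin_four']
lemma epsL3332 : eps 3 3 3 2 = 0 := by simp +decide [eps, det_fin_four']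
lemma epsL3333 : eps 3 3 3 3 = 0 := by simp +decide [eps, det_fin_four']

lemma hMinv : hM⁻¹ = hM := by
  have h : hM * hM = 1 := by
    ext i j
    fin_cases i <;> fin_cases j <;>
      simp [hM, Matrix.mul_apply, Fin.sum_univ_four, Matrix.diagonal_apply, Matrix.one_apply]
  exact Matrix.inv_eq_left_inv h

lemma ef_swap (i j : Fin 4) : ef i * ef j = - (ef j * ef i) :=
  eq_neg_of_add_eq_zero_left (ExteriorAlgebra.ι_add_mul_swap _ _)
lemma ef_sq (i : Fin 4) : ef i * ef i = 0 := ExteriorAlgebra.ι_sq_zero _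
lemma ef_swap' (i j : Fin 4) (x : ExteriorAlgebra ℝ (Fin 4 → ℝ)) :
    ef i * (ef j * x) = -(ef j * (ef i * x)) := by
  rw [← mul_assoc, ← mul_assoc, ef_swap, neg_mul]
lemma ef_sq' (i : Fin 4) (x : ExteriorAlgebra ℝ (Fin 4 → ℝ)) : ef i * (ef i * x) = 0 := by
  rw [← mul_assoc, ef_sq, zero_mul]

lemma s10 : ef 1 * ef 0 = -(ef 0 * ef 1) := ef_swap 1 0
lemma s20 : ef 2 * ef 0 = -(ef 0 * ef 2) := ef_swap 2 0
lemma s30 : ef 3 * ef 0 = -(ef 0 * ef 3) := ef_swap 3 0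
lemma s21 : ef 2 * ef 1 = -(ef 1 * ef 2) := ef_swap 2 1
lemma s31 : ef 3 * ef 1 = -(ef 1 * ef 3) := ef_swap 3 1
lemma s32 : ef 3 * ef 2 = -(ef 2 * ef 3) := ef_swap 3 2
lemma s10' (x) : ef 1 * (ef 0 * x) = -(ef 0 * (ef 1 * x)) := ef_swap' 1 0 x
lemma s20' (x) : ef 2 * (ef 0 * x) = -(ef 0 * (ef 2 * x)) := ef_swap' 2 0 x
lemma s30' (x) : ef 3 * (ef 0 * x) = -(ef 0 * (ef 3 * x)) := ef_swap' 3 0 x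
lemma s21' (x) : ef 2 * (ef 1 * x) = -(ef 1 * (ef 2 * x)) := ef_swap' 2 1 x
lemma s31' (x) : ef 3 * (ef 1 * x) = -(ef 1 * (ef 3 * x)) := ef_swap' 3 1 x
lemma s32' (x) : ef 3 * (ef 2 * x) = -(ef 2 * (ef 3 * x)) := ef_swap' 3 2 x
lemma q0 : ef 0 * ef 0 = 0 := ef_sq 0
lemma q1 : ef 1 * ef 1 = 0 := ef_sq 1
lemma q2 : ef 2 * ef 2 = 0 := ef_sq 2
lemma q3 : ef 3 * ef 3 = 0 := ef_sq 3
lemma q0' (x) : ef 0 * (ef 0 * x) = 0 := ef_sq' 0 x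
lemma q1' (x) : ef 1 * (ef 1 * x) = 0 := ef_sq' 1 x
lemma q2' (x) : ef 2 * (ef 2 * x) = 0 := ef_sq' 2 x
lemma q3' (x) : ef 3 * (ef 3 * x) = 0 := ef_sq' 3 x

lemma e30 : e3 0 = ef 1 * (ef 2 * ef 3) := by
  simp [e3, e4, contr, ef, mul_assoc, CliffordAlgebra.contractLeft_ι_mul,
    CliffordAlgebra.contractLeft_ι, Pi.single_apply]
lemma e31 : e3 1 = -(ef 0 * (ef 2 * ef 3)) := by
  simp [e3, e4, contr, ef, mul_assoc, CliffordAlgebra.contractLeft_ι_mul,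
    CliffordAlgebra.contractLeft_ι, Pi.single_apply]
lemma e32 : e3 2 = ef 0 * (ef 1 * ef 3) := by
  simp [e3, e4, contr, ef, mul_assoc, CliffordAlgebra.contractLeft_ι_mul,
    CliffordAlgebra.contractLeft_ι, Pi.single_apply]
lemma e33 : e3 3 = -(ef 0 * (ef 1 * ef 2)) := by
  simp [e3, e4, contr, ef, mul_assoc, CliffordAlgebra.contractLeft_ι_mul,
    CliffordAlgebra.contractLeft_ι, Pi.single_apply]

/-- `H_a{}^b = (1/2) h^{bb'} ( T^c{}_{b'c} e⁽³⁾_a + T^c{}_{ca} e⁽³⁾_{b'} + T^c{}_{ab'} e⁽³⁾_c )`. -/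
theorem spin_three_form_eq (T : Fin 4 → Fin 4 → Fin 4 → ℝ)
    (hT : ∀ c a' c', T c a' c' = - T c c' a') (a b : Fin 4) :
    Hform T a b
      = (1 / 2 : ℝ) • ∑ b', ∑ c, hM⁻¹ b b' •
          (T c b' c • e3 a + T c c a • e3 b' + T c a b' • e3 c) := by
  have hd : ∀ c i, T c i i = 0 := fun c i => by have := hT c i i; linarith
  have h10 : ∀ c, T c 1 0 = -T c 0 1 := fun c => hT c 1 0
  have h20 : ∀ c, T c 2 0 = -T c 0 2 := fun c => hT c 2 0
  have h30 : ∀ c, T c 3 0 = -T c 0 3 := fun c => hT c 3 0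
  have h21 : ∀ c, T c 2 1 = -T c 1 2 := fun c => hT c 2 1
  have h31 : ∀ c, T c 3 1 = -T c 1 3 := fun c => hT c 3 1
  have h32 : ∀ c, T c 3 2 = -T c 2 3 := fun c => hT c 3 2
  fin_cases a <;> fin_cases b <;>
  · simp only [fk0, fk1, fk2, fk3, Hform, Tform, hMinv, Fin.sum_univ_four, Fin.isValue,
      e30, e31, e32, e33, hd, h10, h20, h30, h21, h31, h32, epsL0000, epsL0001, epsL0002, epsL0003, epsL0010, epsL0011, epsL0012, epsL0013, epsL0020, epsL0021, epsL0022, epsL0023, epsL0030, epsL0031, epsL0032, epsL0033, epsL0100, epsL0101, epsL0102, epsL0103, epsL0110, epsL0111, epsL0112, epsL0113, epsL0120, epsL0121, epsL0122, epsL0123, epsL0130, epsL0131, epsL0132, epsL0133, epsL0200, epsL0201, epsL0202, epsL0203, epsL0210, epsL0211, epsL0212, epsL0213, epsL0220, epsL0221, epsL0222, epsL0223, epsL0230, epsL0231, epsL0232, epsL0233, epsL0300, epsL0301, epsL0302, epsL0303, epsL0310, epsL0311, epsL0312, epsL0313, epsL0320, epsL0321, epsL0322, epsL0323, epsL0330,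 epsL0331, epsL0332, epsL0333, epsL1000, epsL1001, epsL1002, epsL1003, epsL1010, epsL1011, epsL1012, epsL1013, epsL1020, epsL1021, epsL1022, epsL1023, epsL1030, epsL1031, epsL1032, epsL1033, epsL1100, epsL1101, epsL1102, epsL1103, epsL1110, epsL1111, epsL1112, epsL1113, epsL1120, epsL1121, epsL1122, epsL1123, epsL1130, epsL1131, epsL1132, epsL1133, epsL1200, epsL1201, epsL1202, epsL1203, epsL1210, epsL1211, epsL1212, epsL1213, epsL1220, epsL1221, epsL1222, epsL1223, epsL1230, epsL1231, epsL1232, epsL1233, epsL1300, epsL1301, epsL1302, epsL1303, epsL1310, epsL1311, epsL1312, epsL1313, epsL1320, epsL1321, epsL1322, epsL1323, epsL1330, epsL1331, epsL1332, epsL1333, epsL2000, epsL2001, epsL2002, epsL2003, epsL2010, epsL2011, epsL2012, epsL2013, epsL2020, epsL2021, epsL2022, epsL2023, epsL2030, epsL2031, epsL2032, epsL2033, epsL2100, epsL2101, epsL2102, epsL2103, epsL2110, epsL2111, epsL2112, epsL2113, epsL2120, epsL2121, epsL2122, epsL2123, epsL2130, epsL2131, epsL2132, epsL2133, epsL2200,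 epsL2201, epsL2202, epsL2203, epsL2210, epsL2211, epsL2212, epsL2213, epsL2220, epsL2221, epsL2222, epsL2223, epsL2230, epsL2231, epsL2232, epsL2233, epsL2300, epsL2301, epsL2302, epsL2303, epsL2310, epsL2311, epsL2312, epsL2313, epsL2320, epsL2321, epsL2322, epsL2323, epsL2330, epsL2331, epsL2332, epsL2333, epsL3000, epsL3001, epsL3002, epsL3003, epsL3010, epsL3011, epsL3012, epsL3013, epsL3020, epsL3021, epsL3022, epsL3023, epsL3030, epsL3031, epsL3032, epsL3033, epsL3100, epsL3101, epsL3102, epsL3103, epsL3110, epsL3111, epsL3112, epsL3113, epsL3120, epsL3121, epsL3122, epsL3123, epsL3130, epsL3131, epsL3132, epsL3133, epsL3200, epsL3201, epsL3202, epsL3203, epsL3210, epsL3211, epsL3212, epsL3213, epsL3220, epsL3221, epsL3222, epsL3223, epsL3230, epsL3231, epsL3232, epsL3233, epsL3300, epsL3301, epsL3302, epsL3303, epsL3310, epsL3311, epsL3312, epsL3313, epsL3320, epsL3321, epsL3322, epsL3323, epsL3330, epsL3331, epsL3332, epsL3333, hL00, hL01, hL02, hL03, hL10, hL11, hL12, hL13,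 hL20, hL21, hL22, hL23, hL30, hL31, hL32, hL33,
      zero_mul, mul_zero, zero_smul, smul_zero, add_zero, zero_add, neg_zero]
    simp [smul_add, smul_smul, mul_add, mul_smul_comm, smul_neg, neg_neg,
      s10, s20, s30, s21, s31, s32, s10', s20', s30', s21', s31', s32',
      q0, q1, q2, q3, q0', q1', q2', q3']
    try module
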